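/- (Exact uncertainty-set radius for isotropic GMMs; content of Proposition 1 and Theorem 5 in this case.) Let E be a nontrivial real inner product space, x_1, …, x_N ∈ E, γ_1, …, γ_N ≥ 0 with W := Σ_{n=1}^N γ_n > 0, M := W^{-1}·Σ_n γ_n·x_n the weighted mean, and θ' ∈ E. Define S := { ε ∈ ℝ : ε ≥ 0 and for every m ∈ E with ‖m − M‖² ≤ ε, Σ_{n=1}^N γ_n·‖x_n − m‖² ≤ Σ_{n=1}^N γ_n·‖x_n − θ'‖² }. Then ‖θ' − M‖² is the greatest element of S; equivalently, S = [0, ‖θ' − M‖²]. -/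

import Mathlib

/-- Exact uncertainty-set radius for isotropic GMMs: the feasible set of squared
radii `ε` such that every point of the ball `B(M, √ε)` does not decrease the
weighted objective relative to `θ'` has greatest element `‖θ' - M‖²`, and equals
the interval `[0, ‖θ' - M‖²]`. -/
theorem gmm_uncertainty_radius_exact
    {E : Type*} [NormedAddCommGroup E] [InnerProductSpace ℝ E] [Nontrivial E]
    (N : ℕ) (x : Fin N → E) (γ : Fin N → ℝ) (hγ : ∀ n, 0 ≤ γ n)
    (W : ℝ) (hW : W = ∑ n, γ n) (hWpos : 0 < W)
    (M : E) (hM : M = W⁻¹ • ∑ n, γ n • x n) (θ' : E)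
    (S : Set ℝ)
    (hS : S = {ε : ℝ | 0 ≤ ε ∧ ∀ m : E, ‖m - M‖ ^ 2 ≤ ε →
      ∑ n, γ n * ‖x n - m‖ ^ 2 ≤ ∑ n, γ n * ‖x n - θ'‖ ^ 2}) :
    IsGreatest S (‖θ' - M‖ ^ 2) ∧ S = Set.Icc 0 (‖θ' - M‖ ^ 2) := by
  have hsum : (∑ n, γ n • x n) = W • M := by
    rw [hM, smul_smul, mul_inv_cancel₀ hWpos.ne', one_smul]
  have hzero : (∑ n, γ n • (x n - M)) = (0 : E) := by
    simp only [smul_sub]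
    rw [Finset.sum_sub_distrib, hsum, ← Finset.sum_smul, ← hW, sub_self]
  have key : ∀ m : E, ∑ n, γ n * ‖x n - m‖ ^ 2
      = (∑ n, γ n * ‖x n - M‖ ^ 2) + W * ‖m - M‖ ^ 2 := by
    intro m
    have h1 : ∀ n : Fin N, ‖x n - m‖ ^ 2
        = ‖x n - M‖ ^ 2 + 2 * inner ℝ (x n - M) (M - m) + ‖M - m‖ ^ 2 := by
      intro n
      have h := norm_add_sq_real (x n - M) (M - m)
      rw [show x n - M + (M - m) = x n - m by abel] at h
      linarith
    calc ∑ n, γ n * ‖x n - m‖ ^ 2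
        = ∑ n, (γ n * ‖x n - M‖ ^ 2 + 2 * inner ℝ (γ n • (x n - M)) (M - m)
            + γ n * ‖M - m‖ ^ 2) := by
          refine Finset.sum_congr rfl fun n _ => ?_
          rw [h1 n, real_inner_smul_left]; ring
      _ = (∑ n, γ n * ‖x n - M‖ ^ 2)
            + 2 * inner ℝ (∑ n, γ n • (x n - M) : E) (M - m)
            + (∑ n, γ n) * ‖M - m‖ ^ 2 := by
          rw [Finset.sum_add_distrib, Finset.sum_add_distrib, sum_inner,
            ← Finset.mul_sum, ← Finset.sum_mul]
      _ = (∑ n, γ n * ‖x n - M‖ ^ 2) + W * ‖m - M‖ ^ 2 := by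
          rw [hzero, inner_zero_left, ← hW, norm_sub_rev]; ring
  -- the feasibility condition is equivalent to ‖m - M‖² ≤ ‖θ' - M‖²
  have hcond : ∀ m : E,
      (∑ n, γ n * ‖x n - m‖ ^ 2 ≤ ∑ n, γ n * ‖x n - θ'‖ ^ 2)
        ↔ ‖m - M‖ ^ 2 ≤ ‖θ' - M‖ ^ 2 := by
    intro m
    rw [key m, key θ', add_le_add_iff_left, mul_le_mul_iff_of_pos_left hWpos]
  have hmem : ∀ ε : ℝ, ε ∈ S ↔ 0 ≤ ε ∧ ε ≤ ‖θ' - M‖ ^ 2 := by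
    intro ε
    rw [hS]
    simp only [Set.mem_setOf_eq]
    constructor
    · rintro ⟨hε0, hε⟩
      refine ⟨hε0, ?_⟩
      obtain ⟨v, hv⟩ := exists_ne (0 : E)
      have hvn : (0 : ℝ) < ‖v‖ := norm_pos_iff.mpr hv
      set m : E := M + (Real.sqrt ε / ‖v‖) • v with hm
      have hnm : ‖m - M‖ = Real.sqrt ε := by
        rw [hm, add_sub_cancel_left, norm_smul, Real.norm_eq_abs,
          abs_div, abs_of_nonneg (Real.sqrt_nonneg ε), abs_of_pos hvn,
          div_mul_cancel₀ _ hvn.ne']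
      have hnm2 : ‖m - M‖ ^ 2 = ε := by
        rw [hnm, Real.sq_sqrt hε0]
      have := (hcond m).mp (hε m (le_of_eq hnm2))
      rwa [hnm2] at this
    · rintro ⟨hε0, hεR⟩
      exact ⟨hε0, fun m hmε => (hcond m).mpr (hmε.trans hεR)⟩
  have hSeq : S = Set.Icc 0 (‖θ' - M‖ ^ 2) := by
    ext ε; rw [hmem ε, Set.mem_Icc]
  refine ⟨⟨?_, ?_⟩, hSeq⟩
  · exact (hmem _).mpr ⟨sq_nonneg _, le_rfl⟩
  · intro ε hε; exact ((hmem ε).mp hε).2
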